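/- Let f : X → 𝒢(Z,C) be a convex function and x₀ ∈ dom f. If x₀ solves the strict scalarized Stampacchia inequality (svi_I): for all x ∈ X and all z* ∈ C⁻∖{0}, φ_{f,z*}(x₀) = −∞ or 0 ≤ φ′_{f,z*}(x₀, x−x₀), then x₀ solves the strict set-valued Stampacchia inequality (SVI_I): for all x ∈ X, 0⁺f(x₀) ⊇ f′(x₀, x−x₀). If additionally the strong regularity condition holds at x₀, namely inf{−z*(z) : z ∈ f′(x₀,x−x₀)} = φ′_{f,z*}(x₀,x−x₀) for all x ∈ X and all z* ∈ C⁻∖{0}, then the reverse implication holds as well. -/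

import Mathlib

open Set Pointwise

noncomputable section

variable {Z : Type*} [AddCommGroup Z] [Module ℝ Z] [TopologicalSpace Z]

/-- The inf-residual `A ⊖ B = {z : B + {z} ⊆ A}`. -/
def resid (A B : Set Z) : Set Z := {z : Z | B + {z} ⊆ A}

/-- The recession cone `0⁺A`, with the convention `0⁺∅ = ∅`. -/
def recCone (A : Set Z) : Set Z := {z : Z | A.Nonempty ∧ A + {z} ⊆ A}

/-- `A ⊕ B = cl (A + B)`. -/
def oplus (A B : Set Z) : Set Z := closure (A + B)

/-- Membership in `𝒢(Z,C)`: `A = cl co (A + C)`. -/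
def IsG (C A : Set Z) : Prop := A = closure (convexHull ℝ (A + C))

/-- The set `C⁻ \ {0}` of nonzero elements of the negative dual cone. -/
def negDualNZ (C : Set Z) : Set (Z →L[ℝ] ℝ) :=
  {p : Z →L[ℝ] ℝ | (∀ c ∈ C, p c ≤ 0) ∧ p ≠ 0}

/-- `inf {-z*(z) : z ∈ A}` as an extended real. -/
def scal (p : Z →L[ℝ] ℝ) (A : Set Z) : EReal :=
  sInf ((fun z => ((-(p z) : ℝ) : EReal)) '' A)

/-- Support function `σ(z*|A) = sup {z*(z) : z ∈ A}` as an extended real. -/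
def suppF (p : Z →L[ℝ] ℝ) (A : Set Z) : EReal :=
  sSup ((fun z => ((p z : ℝ) : EReal)) '' A)

/-- Inf-residuation on the extended reals: `r ⊖ s = inf {t ∈ ℝ : r ≤ s + t}`. -/
def eresid (r s : EReal) : EReal :=
  sInf ((fun t : ℝ => (t : EReal)) '' {t : ℝ | r ≤ s + (t : EReal)})

variable {X : Type*} [AddCommGroup X] [Module ℝ X]

/-- The scalarization `φ_{f,z*}(x) = inf {-z*(z) : z ∈ f(x)}`. -/
def phi (f : X → Set Z) (p : Z →L[ℝ] ℝ) (x : X) : EReal := scal p (f x)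

/-- Convexity for set-valued functions:
`f(t x₁ + (1-t) x₂) ⊇ cl (t f(x₁) + (1-t) f(x₂))`. -/
def ConvexSV (f : X → Set Z) : Prop :=
  ∀ x₁ x₂ : X, ∀ t : ℝ, t ∈ Ioo (0:ℝ) 1 →
    closure (t • f x₁ + (1 - t) • f x₂) ⊆ f (t • x₁ + (1 - t) • x₂)

/-- The set-valued directional derivative
`f′(x,u) = ⋂_{t₀>0} cl co ⋃_{0<t<t₀} (1/t)•(f(x+tu) ⊖ f(x))`. -/
def sder (f : X → Set Z) (x u : X) : Set Z :=
  ⋂ t₀ ∈ Ioi (0:ℝ), closure (convexHull ℝ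
    (⋃ t ∈ Ioo (0:ℝ) t₀, (1 / t) • resid (f (x + t • u)) (f x)))

/-- The scalar Dini derivative `φ′_{f,z*}(x,u) = inf_{t>0} (1/t)(φ(x+tu) ⊖ φ(x))`. -/
def phiDer (f : X → Set Z) (p : Z →L[ℝ] ℝ) (x u : X) : EReal :=
  ⨅ t ∈ Ioi (0:ℝ), (((1 / t : ℝ)) : EReal) * eresid (phi f p (x + t • u)) (phi f p x)

end

private lemma ereal_le_sInf_add {A : Set EReal} {r : EReal} {c : ℝ}
    (h : ∀ b ∈ A, r ≤ b + (c : EReal)) : r ≤ sInf A + (c : EReal) := by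
  have h1 : r - (c : EReal) ≤ sInf A :=
    le_sInf fun b hb => EReal.sub_le_of_le_add (h b hb)
  exact (EReal.sub_le_iff_le_add (Or.inl (EReal.coe_ne_bot c))
    (Or.inl (EReal.coe_ne_top c))).1 h1

private lemma ereal_nonneg_of_mul {c : ℝ} (hc : 0 < c) {e : EReal}
    (h : 0 ≤ (c : EReal) * e) : 0 ≤ e := by
  induction e with
  | bot => rw [EReal.coe_mul_bot_of_pos hc] at h; simp at h
  | coe x =>
      rw [← EReal.coe_mul] at h
      have hx : (0:ℝ) ≤ c * x := by exact_mod_cast h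
      have : (0:ℝ) ≤ x := by
        by_contra h'
        push_neg at h'
        nlinarith
      exact_mod_cast this
  | top => exact le_top

theorem stmt_10
  {Z : Type*} [AddCommGroup Z] [Module ℝ Z] [TopologicalSpace Z]
  [IsTopologicalAddGroup Z] [ContinuousSMul ℝ Z] [LocallyConvexSpace ℝ Z] [T2Space Z]
  {X : Type*} [AddCommGroup X] [Module ℝ X]
  (C : Set Z) (hCclosed : IsClosed C) (hCconv : Convex ℝ C)
  (hCcone : ∀ c ∈ C, ∀ r : ℝ, 0 < r → r • c ∈ C) (hC0 : (0:Z) ∈ C)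
  (hdual : (negDualNZ C).Nonempty)
  (f : X → Set Z) (hG : ∀ x, IsG C (f x)) (hf : ConvexSV f)
  (x₀ : X) (hx₀ : (f x₀).Nonempty) :
    ((∀ x : X, ∀ p ∈ negDualNZ C,
      phi f p x₀ = ⊥ ∨ (0:EReal) ≤ phiDer f p x₀ (x - x₀)) → (∀ x : X, sder f x₀ (x - x₀) ⊆ recCone (f x₀)))
    ∧ ((∀ x : X, ∀ p ∈ negDualNZ C,
          scal p (sder f x₀ (x - x₀)) = phiDer f p x₀ (x - x₀)) →
        ((∀ x : X, sder f x₀ (x - x₀) ⊆ recCone (f x₀)) → (∀ x : X, ∀ p ∈ negDualNZ C,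
      phi f p x₀ = ⊥ ∨ (0:EReal) ≤ phiDer f p x₀ (x - x₀)))) := by
  have hclosed : IsClosed (f x₀) := by rw [hG x₀]; exact isClosed_closure
  have hconv : Convex ℝ (f x₀) := by rw [hG x₀]; exact (convex_convexHull ℝ _).closure
  have haddC : ∀ y, y ∈ f x₀ → ∀ c ∈ C, y + c ∈ f x₀ := by
    intro y hy c hc
    rw [hG x₀]
    exact subset_closure (subset_convexHull ℝ _ (Set.add_mem_add hy hc))
  constructor
  · -- svi_I → SVI_I
    intro h x z hz
    refine ⟨hx₀, ?_⟩
    rintro w hw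
    rw [Set.mem_add] at hw
    obtain ⟨a, ha, b, hb, rfl⟩ := hw
    rw [Set.mem_singleton_iff] at hb
    rw [hb]
    by_contra hnot
    obtain ⟨p, u, hpu, hup⟩ :=
      geometric_hahn_banach_closed_point hconv hclosed hnot
    -- p belongs to the negative dual cone
    have hpC : ∀ c ∈ C, p c ≤ 0 := by
      intro c hc
      by_contra hpc
      push_neg at hpc
      set r := (u - p a + 1) / p c with hr
      have hr0 : 0 < r := div_pos (by linarith [hpu a ha]) hpc
      have hmem : a + r • c ∈ f x₀ := haddC a ha _ (hCcone c hc r hr0)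
      have h2 := hpu _ hmem
      rw [map_add, map_smul, smul_eq_mul, hr, div_mul_cancel₀ _ (ne_of_gt hpc)] at h2
      linarith
    have hpne : p ≠ 0 := by
      intro h0
      have h1 := hpu a ha
      rw [h0] at h1 hup
      simp only [ContinuousLinearMap.zero_apply] at h1 hup
      linarith
    have hder := (h x p ⟨hpC, hpne⟩).resolve_left (by
      intro hb
      have hle : (↑(-u) : EReal) ≤ phi f p x₀ := by
        refine le_sInf ?_
        rintro b' ⟨b'', hb'', rfl⟩
        exact EReal.coe_le_coe_iff.2 (by linarith [hpu b'' hb''])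
      rw [hb, le_bot_iff] at hle
      exact EReal.coe_ne_bot _ hle)
    -- the halfspace {w | p w ≤ 0}
    have hz1 : z ∈ closure (convexHull ℝ
        (⋃ t ∈ Ioo (0:ℝ) 1, (1 / t) • resid (f (x₀ + t • (x - x₀))) (f x₀))) := by
      have := hz
      simp only [sder, Set.mem_iInter] at this
      exact this 1 (Set.mem_Ioi.2 one_pos)
    have hpz : p z ≤ 0 := by
      have hsub : closure (convexHull ℝ
          (⋃ t ∈ Ioo (0:ℝ) 1, (1 / t) • resid (f (x₀ + t • (x - x₀))) (f x₀)))
          ⊆ {w : Z | p w ≤ 0} := by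
        apply closure_minimal
        · apply convexHull_min
          · rintro w hw
            simp only [Set.mem_iUnion] at hw
            obtain ⟨t, ht, hw⟩ := hw
            obtain ⟨v, hv, rfl⟩ := hw
            have ht0 : 0 < t := ht.1
            -- key: -p v ≥ 0
            have key : eresid (phi f p (x₀ + t • (x - x₀))) (phi f p x₀)
                ≤ ((-(p v) : ℝ) : EReal) := by
              apply sInf_le
              refine ⟨-(p v), ?_, rfl⟩
              show phi f p (x₀ + t • (x - x₀)) ≤ phi f p x₀ + ((-(p v) : ℝ) : EReal)
              apply ereal_le_sInf_add
              rintro b' ⟨a', ha', rfl⟩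
              have hav : a' + v ∈ f (x₀ + t • (x - x₀)) :=
                hv (Set.add_mem_add ha' rfl)
              calc phi f p (x₀ + t • (x - x₀)) ≤ ((-(p (a' + v)) : ℝ) : EReal) :=
                    sInf_le ⟨_, hav, rfl⟩
                _ = ((-(p a') : ℝ) : EReal) + ((-(p v) : ℝ) : EReal) := by
                    rw [← EReal.coe_add, map_add]; norm_cast; ring
            have hnn : (0 : EReal) ≤ eresid (phi f p (x₀ + t • (x - x₀))) (phi f p x₀) := by
              have hle2 : phiDer f p x₀ (x - x₀) ≤
                  (((1 / t : ℝ)) : EReal) * eresid (phi f p (x₀ + t • (x - x₀))) (phi f p x₀) := by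
                exact iInf₂_le t (Set.mem_Ioi.2 ht0)
              exact ereal_nonneg_of_mul (by positivity : (0:ℝ) < 1 / t) (le_trans hder hle2)
            have hpv : (0:ℝ) ≤ -(p v) := by
              have := le_trans hnn key
              exact_mod_cast this
            show p ((1 / t) • v) ≤ 0
            rw [map_smul, smul_eq_mul]
            have : (0:ℝ) < 1 / t := by positivity
            nlinarith
          · intro w₁ hw₁ w₂ hw₂ s₁ s₂ hs₁ hs₂ hss
            simp only [Set.mem_setOf_eq] at hw₁ hw₂ ⊢
            rw [map_add, map_smul, map_smul, smul_eq_mul, smul_eq_mul]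
            nlinarith
        · exact isClosed_le p.continuous continuous_const
      exact hsub hz1
    have h3 := hpu a ha
    rw [map_add] at hup
    linarith
  · -- regularity + SVI_I → svi_I
    intro hreg hSVI x p hp
    by_cases hbot : phi f p x₀ = ⊥
    · exact Or.inl hbot
    · right
      rw [← hreg x p hp]
      refine le_sInf ?_
      rintro b ⟨z, hz, rfl⟩
      have hrec := hSVI x hz
      obtain ⟨-, hadd⟩ := hrec
      -- show p z ≤ 0
      have hpz : p z ≤ 0 := by
        by_contra hpc
        push_neg at hpc
        obtain ⟨a, ha⟩ := hx₀
        have hn : ∀ n : ℕ, a + n • z ∈ f x₀ := by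
          intro n
          induction n with
          | zero => simpa using ha
          | succ k ih =>
              have : (a + k • z) + z ∈ f x₀ :=
                hadd (Set.add_mem_add ih rfl)
              rw [succ_nsmul, ← add_assoc]
              exact this
        have hle : ∀ n : ℕ, phi f p x₀ ≤ ((-(p a) - n * p z : ℝ) : EReal) := by
          intro n
          have : phi f p x₀ ≤ ((-(p (a + n • z)) : ℝ) : EReal) :=
            sInf_le ⟨_, hn n, rfl⟩
          convert this using 2
          rw [map_add, map_nsmul, nsmul_eq_mul]
          push_cast
          ring
        have hnetop : phi f p x₀ ≠ ⊤ := by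
          intro htop
          have := hle 0
          rw [htop, top_le_iff] at this
          exact EReal.coe_ne_top _ this
        set m := (phi f p x₀).toReal with hm
        have hcoe : (m : EReal) = phi f p x₀ := EReal.coe_toReal hnetop hbot
        obtain ⟨n, hn'⟩ := exists_nat_gt ((-(p a) - m) / p z)
        have := hle n
        rw [← hcoe, EReal.coe_le_coe_iff] at this
        have h2 : ((-(p a) - m) / p z) * p z < n * p z :=
          mul_lt_mul_of_pos_right hn' hpc
        rw [div_mul_cancel₀ _ (ne_of_gt hpc)] at h2
        linarith
      exact EReal.coe_nonneg.2 (by linarith)
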